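/- Let d ≥ 3, ρ > ρ_c, and define Q̂_n(k) = Q̂*(k) for k ≠ n and Q̂_n(n) = Q̂*(n) + (ρ−ρ_c)/(nρ). Then \sum_{k=1}^∞ k·Q̂_n(k) = 1 for every n, Q̂_n → Q̂* pointwise as n → ∞, and S(Q_n) = S(Q*) − (ρ−ρ_c)/(nρ) + (Q̂*(n) + (ρ−ρ_c)/(nρ))·log(1 + (ρ−ρ_c)/(nρ Q̂*(n))) → S(Q*) as n → ∞. -/

import Mathlib

open Real Filter

/-- For `d ≥ 3` and `ρ > ρ_c`, the sequence `Q̂_n` obtained from `Q̂*` by adding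
mass `(ρ-ρ_c)/(nρ)` at `k = n` satisfies `∑_k k·Q̂_n(k) = 1` for every `n ≥ 1`,
converges pointwise to `Q̂*`, and its entropy functional value
`S(Q_n) = S(Q*) - (ρ-ρ_c)/(nρ) + (Q̂*(n) + (ρ-ρ_c)/(nρ))·log(1 + (ρ-ρ_c)/(nρ·Q̂*(n)))`
tends to `S(Q*)` as `n → ∞`. -/
theorem minimising_sequence (β ρ : ℝ) (hβ : 0 < β) (d : ℕ) (hd : 3 ≤ d)
    (ρc : ℝ)
    (hρc : ρc = (4 * π * β) ^ (-(d : ℝ) / 2) * (∑' k : ℕ, ((k : ℝ) + 1) ^ (-(d : ℝ) / 2)))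
    (hρ : ρc < ρ)
    (Qstar : ℕ → ℝ)
    (hQstar : ∀ k : ℕ, Qstar k = (k : ℝ) ^ (-(1 + (d : ℝ) / 2)) / (ρ * (4 * π * β) ^ ((d : ℝ) / 2)))
    (Qn : ℕ → ℕ → ℝ)
    (hQn : ∀ n k : ℕ, Qn n k = if k = n then Qstar k + (ρ - ρc) / (n * ρ) else Qstar k)
    (S : (ℕ → ℝ) → ℝ)
    (hS : ∀ Q : ℕ → ℝ,
      S Q = ∑' k : ℕ, Q (k + 1) * (Real.log (Q (k + 1) / Qstar (k + 1)) - 1)) :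
    (∀ n : ℕ, 1 ≤ n → (∑' k : ℕ, ((k : ℝ) + 1) * Qn n (k + 1)) = 1) ∧
    (∀ k : ℕ, Tendsto (fun n => Qn n k) atTop (nhds (Qstar k))) ∧
    (∀ n : ℕ, 1 ≤ n →
      S (Qn n) = S Qstar - (ρ - ρc) / (n * ρ)
        + (Qstar n + (ρ - ρc) / (n * ρ))
          * Real.log (1 + (ρ - ρc) / (n * ρ * Qstar n))) ∧
    Tendsto (fun n => S (Qn n)) atTop (nhds (S Qstar)) := by
  have hπβ : (0:ℝ) < 4 * π * β := by positivity
  have hE : (0:ℝ) < (4 * π * β) ^ ((d : ℝ) / 2) := rpow_pos_of_pos hπβ _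
  have hρc0 : 0 ≤ ρc := by
    rw [hρc]
    exact mul_nonneg (rpow_pos_of_pos hπβ _).le
      (tsum_nonneg fun k => rpow_nonneg (by positivity) _)
  have hρ0 : 0 < ρ := lt_of_le_of_lt hρc0 hρ
  have hρρc : 0 < ρ - ρc := sub_pos.mpr hρ
  have hD : (0:ℝ) < ρ * (4 * π * β) ^ ((d : ℝ) / 2) := mul_pos hρ0 hE
  have hd3 : (3:ℝ) ≤ (d:ℝ) := by exact_mod_cast hd
  have hp : (-(1 + (d:ℝ)/2)) < -1 := by linarith
  have hq : (-(d:ℝ)/2) < -1 := by linarith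
  have hQpos : ∀ n : ℕ, 1 ≤ n → 0 < Qstar n := by
    intro n hn
    have hx : (0:ℝ) < (n:ℝ) := by exact_mod_cast hn
    rw [hQstar]
    exact div_pos (rpow_pos_of_pos hx _) hD
  -- summability facts
  have hsumq : Summable (fun k : ℕ => ((k : ℝ) + 1) ^ (-(d:ℝ)/2)) := by
    have := (summable_nat_add_iff (f := fun k : ℕ => ((k : ℝ)) ^ (-(d:ℝ)/2)) 1).mpr
      (Real.summable_nat_rpow.mpr hq)
    simpa [Nat.cast_add] using this
  have hsump : Summable (fun k : ℕ => ((k : ℝ) + 1) ^ (-(1 + (d:ℝ)/2))) := by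
    have := (summable_nat_add_iff (f := fun k : ℕ => ((k : ℝ)) ^ (-(1 + (d:ℝ)/2))) 1).mpr
      (Real.summable_nat_rpow.mpr hp)
    simpa [Nat.cast_add] using this
  have hsumQ : Summable (fun k : ℕ => Qstar (k + 1)) := by
    have h : (fun k : ℕ => Qstar (k + 1)) =
        fun k : ℕ => ((k : ℝ) + 1) ^ (-(1 + (d:ℝ)/2)) / (ρ * (4 * π * β) ^ ((d : ℝ) / 2)) := by
      funext k; rw [hQstar]; push_cast; ring_nf
    rw [h]
    exact hsump.div_const _
  -- key identity
  have hkey : ∀ k : ℕ, ((k : ℝ) + 1) * Qstar (k + 1) =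
      ((k : ℝ) + 1) ^ (-(d:ℝ)/2) / (ρ * (4 * π * β) ^ ((d : ℝ) / 2)) := by
    intro k
    have hx : (0:ℝ) < (k:ℝ) + 1 := by positivity
    rw [hQstar]
    have hc : ((k + 1 : ℕ) : ℝ) = (k : ℝ) + 1 := by push_cast; ring
    rw [hc, ← mul_div_assoc]
    congr 1
    calc ((k:ℝ)+1) * ((k:ℝ)+1) ^ (-(1 + (d:ℝ)/2))
        = ((k:ℝ)+1) ^ (1:ℝ) * ((k:ℝ)+1) ^ (-(1 + (d:ℝ)/2)) := by rw [rpow_one]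
      _ = ((k:ℝ)+1) ^ (1 + -(1 + (d:ℝ)/2)) := (Real.rpow_add hx _ _).symm
      _ = ((k:ℝ)+1) ^ (-(d:ℝ)/2) := by
            rw [show (1 + -(1 + (d:ℝ)/2)) = -(d:ℝ)/2 by ring]
  have hsumwQ : Summable (fun k : ℕ => ((k : ℝ) + 1) * Qstar (k + 1)) :=
    Summable.congr (hsumq.div_const (ρ * (4 * π * β) ^ ((d : ℝ) / 2)))
      (fun k => (hkey k).symm)
  -- weighted sum value
  have hT : (∑' k : ℕ, ((k : ℝ) + 1) ^ (-(d:ℝ)/2)) = ρc * (4 * π * β) ^ ((d : ℝ) / 2) := by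
    rw [hρc, neg_div, Real.rpow_neg hπβ.le]
    field_simp
  have htsumw : (∑' k : ℕ, ((k : ℝ) + 1) * Qstar (k + 1)) = ρc / ρ := by
    have h1 : (∑' k : ℕ, ((k : ℝ) + 1) * Qstar (k + 1)) =
        (∑' k : ℕ, ((k : ℝ) + 1) ^ (-(d:ℝ)/2)) / (ρ * (4 * π * β) ^ ((d : ℝ) / 2)) := by
      rw [← tsum_div_const]; exact tsum_congr hkey
    rw [h1, hT]
    rw [mul_comm ρ _, ← div_div, mul_div_assoc, div_self hE.ne', mul_one]
  -- Claim 1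
  have claim1 : ∀ n : ℕ, 1 ≤ n → (∑' k : ℕ, ((k : ℝ) + 1) * Qn n (k + 1)) = 1 := by
    intro n hn
    have hn0 : ((n:ℝ)) ≠ 0 := by positivity
    have hfun : (fun k : ℕ => ((k : ℝ) + 1) * Qn n (k + 1)) =
        fun k : ℕ => ((k : ℝ) + 1) * Qstar (k + 1)
          + (if k = n - 1 then (n:ℝ) * ((ρ - ρc) / (n * ρ)) else 0) := by
      funext k
      rw [hQn]
      by_cases hk : k + 1 = n
      · have hkc : ((k:ℝ) + 1) = (n:ℝ) := by exact_mod_cast hk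
        rw [if_pos hk, if_pos (by omega : k = n - 1), hkc]
        ring
      · rw [if_neg hk, if_neg (by omega : ¬ k = n - 1), add_zero]
    rw [hfun, Summable.tsum_add hsumwQ ((hasSum_ite_eq (n-1)
      ((n:ℝ) * ((ρ - ρc) / (n * ρ)))).summable), htsumw, tsum_ite_eq]
    field_simp
    ring
  -- Claim 2
  have claim2 : ∀ k : ℕ, Tendsto (fun n => Qn n k) atTop (nhds (Qstar k)) := by
    intro k
    have h : ∀ᶠ n in atTop, Qstar k = Qn n k := by
      filter_upwards [eventually_gt_atTop k] with n hn
      rw [hQn, if_neg (by omega)]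
    exact Tendsto.congr' h tendsto_const_nhds
  -- S at Qstar
  have hneg : ∀ k : ℕ, Qstar (k+1) * (Real.log (Qstar (k+1) / Qstar (k+1)) - 1)
      = -Qstar (k+1) := by
    intro k
    rw [div_self (hQpos (k+1) (by omega)).ne', Real.log_one]; ring
  have hSstar : S Qstar = ∑' k : ℕ, -Qstar (k+1) := by
    rw [hS]; exact tsum_congr hneg
  -- Claim 3
  have claim3 : ∀ n : ℕ, 1 ≤ n →
      S (Qn n) = S Qstar - (ρ - ρc) / (n * ρ)
        + (Qstar n + (ρ - ρc) / (n * ρ))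
          * Real.log (1 + (ρ - ρc) / (n * ρ * Qstar n)) := by
    intro n hn
    have hQn0 : Qstar n ≠ 0 := (hQpos n hn).ne'
    have hfun : (fun k : ℕ => Qn n (k+1) * (Real.log (Qn n (k+1) / Qstar (k+1)) - 1)) =
        fun k : ℕ => -Qstar (k+1) +
          (if k = n - 1 then
            (-( (ρ - ρc) / (n * ρ)) + (Qstar n + (ρ - ρc) / (n * ρ))
              * Real.log (1 + (ρ - ρc) / (n * ρ * Qstar n))) else 0) := by
      funext k
      rw [hQn]
      by_cases hk : k + 1 = n
      · rw [if_pos hk, if_pos (by omega : k = n - 1), hk]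
        have hdiv : (Qstar n + (ρ - ρc) / (n * ρ)) / Qstar n
            = 1 + (ρ - ρc) / (n * ρ * Qstar n) := by
          rw [add_div, div_self hQn0, div_div]
        rw [hdiv]
        ring
      · rw [if_neg hk, if_neg (by omega : ¬ k = n - 1),
          div_self (hQpos (k+1) (by omega)).ne', Real.log_one]
        ring
    rw [hS, hfun, Summable.tsum_add hsumQ.neg ((hasSum_ite_eq (n-1) _).summable),
      ← hSstar, tsum_ite_eq]
    ring
  refine ⟨claim1, claim2, claim3, ?_⟩
  -- Claim 4 : convergence of S (Qn n)
  set E := (4 * π * β) ^ ((d : ℝ) / 2) with hEdef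
  set B := (ρ - ρc) * E with hBdef
  have hB : (0:ℝ) < B := mul_pos hρρc hE
  have hr : ∀ n : ℕ, 1 ≤ n →
      (ρ - ρc) / ((n:ℝ) * ρ * Qstar n) = B * (n:ℝ) ^ ((d:ℝ)/2) := by
    intro n hn
    have hx : (0:ℝ) < (n:ℝ) := by exact_mod_cast hn
    rw [hQstar]
    have h1 : (n:ℝ) * (n:ℝ) ^ (-(1 + (d:ℝ)/2)) = ((n:ℝ) ^ ((d:ℝ)/2))⁻¹ := by
      rw [← Real.rpow_neg hx.le]
      calc (n:ℝ) * (n:ℝ) ^ (-(1 + (d:ℝ)/2))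
          = (n:ℝ) ^ (1:ℝ) * (n:ℝ) ^ (-(1 + (d:ℝ)/2)) := by rw [rpow_one]
        _ = (n:ℝ) ^ (1 + -(1 + (d:ℝ)/2)) := (Real.rpow_add hx _ _).symm
        _ = (n:ℝ) ^ (-((d:ℝ)/2)) := by norm_num
    have h2 : (n:ℝ) * ρ * ((n:ℝ) ^ (-(1 + (d:ℝ)/2)) / (ρ * E))
        = ((n:ℝ) ^ ((d:ℝ)/2))⁻¹ * E⁻¹ := by
      have h3 : (n:ℝ) * ρ * ((n:ℝ) ^ (-(1 + (d:ℝ)/2)) / (ρ * E))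
          = ((n:ℝ) * (n:ℝ) ^ (-(1 + (d:ℝ)/2))) * (ρ / (ρ * E)) := by ring
      rw [h3, h1, div_mul_cancel_left₀ hρ0.ne' E]
    rw [h2, ← mul_inv, div_eq_mul_inv, inv_inv, hBdef]
    ring
  have hεto : Tendsto (fun n : ℕ => (ρ - ρc) / ((n:ℝ) * ρ)) atTop (nhds 0) := by
    apply Tendsto.div_atTop tendsto_const_nhds
    exact Tendsto.atTop_mul_const hρ0 tendsto_natCast_atTop_atTop
  have hlogto : Tendsto (fun n : ℕ => Real.log (n:ℝ) / (n:ℝ)) atTop (nhds 0) :=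
    (Real.isLittleO_log_id_atTop.tendsto_div_nhds_zero).comp tendsto_natCast_atTop_atTop
  set A := 1 / (ρ * E) + (ρ - ρc) / ρ with hAdef
  have hA : (0:ℝ) < A := by
    rw [hAdef]
    positivity
  have hgto : Tendsto (fun n : ℕ =>
      A * Real.log (1 + B) / (n:ℝ) + A * ((d:ℝ)/2) * (Real.log (n:ℝ) / (n:ℝ)))
      atTop (nhds 0) := by
    have h1 : Tendsto (fun n : ℕ => A * Real.log (1 + B) / (n:ℝ)) atTop (nhds 0) :=
      Tendsto.div_atTop tendsto_const_nhds tendsto_natCast_atTop_atTop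
    have h2 := hlogto.const_mul (A * ((d:ℝ)/2))
    simpa using h1.add h2
  have hTto : Tendsto (fun n : ℕ =>
      (Qstar n + (ρ - ρc) / ((n:ℝ) * ρ))
        * Real.log (1 + (ρ - ρc) / ((n:ℝ) * ρ * Qstar n))) atTop (nhds 0) := by
    apply squeeze_zero' ?_ ?_ hgto
    · filter_upwards [eventually_ge_atTop 1] with n hn
      have hx : (0:ℝ) < (n:ℝ) := by exact_mod_cast hn
      have h1 : 0 < Qstar n + (ρ - ρc) / ((n:ℝ) * ρ) :=
        add_pos (hQpos n hn) (div_pos hρρc (by positivity))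
      have h2 : 0 ≤ Real.log (1 + (ρ - ρc) / ((n:ℝ) * ρ * Qstar n)) := by
        apply Real.log_nonneg
        rw [hr n hn]
        nlinarith [rpow_nonneg hx.le ((d:ℝ)/2), hB]
      exact mul_nonneg h1.le h2
    · filter_upwards [eventually_ge_atTop 1] with n hn
      have hx : (0:ℝ) < (n:ℝ) := by exact_mod_cast hn
      have hx1 : (1:ℝ) ≤ (n:ℝ) := by exact_mod_cast hn
      have hxp : (1:ℝ) ≤ (n:ℝ) ^ ((d:ℝ)/2) := Real.one_le_rpow hx1 (by positivity)
      -- bound on the coefficient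
      have hb1 : Qstar n + (ρ - ρc) / ((n:ℝ) * ρ) ≤ A / (n:ℝ) := by
        have hQb : Qstar n ≤ (1 / (ρ * E)) / (n:ℝ) := by
          rw [hQstar]
          have : (n:ℝ) ^ (-(1 + (d:ℝ)/2)) ≤ (n:ℝ) ^ (-1:ℝ) :=
            rpow_le_rpow_of_exponent_le hx1 (by linarith)
          rw [Real.rpow_neg_one] at this
          calc (n:ℝ) ^ (-(1 + (d:ℝ)/2)) / (ρ * E) ≤ (n:ℝ)⁻¹ / (ρ * E) :=
                div_le_div_of_nonneg_right this (by positivity) |>.trans_eq rfl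
            _ = (1 / (ρ * E)) / (n:ℝ) := by ring
        have hεb : (ρ - ρc) / ((n:ℝ) * ρ) = ((ρ - ρc) / ρ) / (n:ℝ) := by
          rw [div_div]; ring_nf
        rw [hAdef]
        calc Qstar n + (ρ - ρc) / ((n:ℝ) * ρ)
            ≤ (1 / (ρ * E)) / (n:ℝ) + ((ρ - ρc) / ρ) / (n:ℝ) := by
              rw [hεb]; exact add_le_add_left hQb _
          _ = (1 / (ρ * E) + (ρ - ρc) / ρ) / (n:ℝ) := by ring
      -- bound on the log
      have hb2 : Real.log (1 + (ρ - ρc) / ((n:ℝ) * ρ * Qstar n))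
          ≤ Real.log (1 + B) + ((d:ℝ)/2) * Real.log (n:ℝ) := by
        rw [hr n hn]
        have harg : 1 + B * (n:ℝ) ^ ((d:ℝ)/2) ≤ (1 + B) * (n:ℝ) ^ ((d:ℝ)/2) := by
          nlinarith [hB]
        calc Real.log (1 + B * (n:ℝ) ^ ((d:ℝ)/2))
            ≤ Real.log ((1 + B) * (n:ℝ) ^ ((d:ℝ)/2)) :=
              Real.log_le_log (by positivity) harg
          _ = Real.log (1 + B) + Real.log ((n:ℝ) ^ ((d:ℝ)/2)) :=
              Real.log_mul (by positivity) (by positivity)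
          _ = Real.log (1 + B) + ((d:ℝ)/2) * Real.log (n:ℝ) := by
              rw [Real.log_rpow hx]
      have hlog0 : 0 ≤ Real.log (1 + (ρ - ρc) / ((n:ℝ) * ρ * Qstar n)) := by
        apply Real.log_nonneg
        rw [hr n hn]
        nlinarith [rpow_nonneg hx.le ((d:ℝ)/2), hB]
      have hc0 : 0 ≤ Qstar n + (ρ - ρc) / ((n:ℝ) * ρ) :=
        (add_pos (hQpos n hn) (div_pos hρρc (by positivity))).le
      calc (Qstar n + (ρ - ρc) / ((n:ℝ) * ρ))
            * Real.log (1 + (ρ - ρc) / ((n:ℝ) * ρ * Qstar n))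
          ≤ (A / (n:ℝ)) * (Real.log (1 + B) + ((d:ℝ)/2) * Real.log (n:ℝ)) :=
            mul_le_mul hb1 hb2 hlog0 (by positivity)
        _ = A * Real.log (1 + B) / (n:ℝ) + A * ((d:ℝ)/2) * (Real.log (n:ℝ) / (n:ℝ)) := by
            ring
  have hmain : Tendsto (fun n : ℕ =>
      S Qstar - (ρ - ρc) / ((n:ℝ) * ρ)
        + (Qstar n + (ρ - ρc) / ((n:ℝ) * ρ))
          * Real.log (1 + (ρ - ρc) / ((n:ℝ) * ρ * Qstar n))) atTop (nhds (S Qstar)) := by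
    have h := (tendsto_const_nhds (x := S Qstar) (f := atTop (α := ℕ))).sub hεto |>.add hTto
    simpa only [sub_zero, add_zero] using h
  refine hmain.congr' ?_
  filter_upwards [eventually_ge_atTop 1] with n hn
  exact (claim3 n hn).symm
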